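/- Assume (K0) and (K1) with constants p₀ > 1, t₀ > 0 and c̄ > 1, and let Φ be the function from Lemma 1.1 (i.e. Φ : [0,r₀) → [0,∞) is strictly increasing, continuous, Φ(0)=0, and ∫₀^{Φ(r)} l(s) ds = r² for r ∈ (0,r₀), where r₀ = (∫₀^∞ l)^{1/2}). Then there exist r* ∈ (0, r₀) with Φ(r*) ≤ min{1, t₀} and a constant C > 0 depending only on p₀ and c̄ such that for every p with 1 ≤ p ≤ p₀ and every r ∈ (0, r*]: ( ∫₀^{Φ(r)} l(s)^p ds ) · Φ(r)^{p−1} ≤ C · r^{2p}. -/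

import Mathlib

open MeasureTheory Set intervalIntegral Filter ENNReal

/-- `r₀ = (∫₀^∞ l)^{1/2} ∈ (0,∞]` (as an extended nonnegative real). -/
noncomputable def rZero (l : ℝ → ℝ) : ℝ≥0∞ :=
  (∫⁻ t in Set.Ioi (0:ℝ), ENNReal.ofReal (l t)) ^ ((1:ℝ) / 2)

/-- The defining properties of the intrinsic scaling function `Φ` from Lemma 1.1:
`Φ : [0,r₀) → [0,∞)` is strictly increasing, continuous, `Φ(0) = 0` and
`∫₀^{Φ(r)} l = r²` for `r ∈ (0, r₀)`. -/
def IsScalingFunction (l : ℝ → ℝ) (Φ : ℝ → ℝ) : Prop :=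
  (∀ r : ℝ, 0 ≤ r → ENNReal.ofReal r < rZero l → 0 ≤ Φ r) ∧
  StrictMonoOn Φ {r : ℝ | 0 ≤ r ∧ ENNReal.ofReal r < rZero l} ∧
  ContinuousOn Φ {r : ℝ | 0 ≤ r ∧ ENNReal.ofReal r < rZero l} ∧
  Φ 0 = 0 ∧
  (∀ r : ℝ, 0 < r → ENNReal.ofReal r < rZero l →
    (∫ s in (0:ℝ)..(Φ r), l s) = r ^ 2)

/-- Pointwise bound `a^p ≤ a + a^{p₀}` for `0 ≤ a` and `1 ≤ p ≤ p₀`. -/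
lemma rpow_le_add_rpow_of_le {a p p₀ : ℝ} (ha : 0 ≤ a) (hp1 : 1 ≤ p) (hpp₀ : p ≤ p₀) :
    a ^ p ≤ a + a ^ p₀ := by
  rcases eq_or_lt_of_le ha with h0 | hapos
  · rw [← h0, Real.zero_rpow (by linarith), Real.zero_rpow (by linarith)]
    norm_num
  rcases le_or_gt a 1 with ha1 | ha1
  · have h1 : a ^ p ≤ a ^ (1:ℝ) := Real.rpow_le_rpow_of_exponent_ge hapos ha1 hp1
    have h2 : 0 ≤ a ^ p₀ := Real.rpow_nonneg ha _
    rw [Real.rpow_one] at h1; linarith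
  · have h1 : a ^ p ≤ a ^ p₀ := Real.rpow_le_rpow_of_exponent_le ha1.le hpp₀
    linarith

/-- Lemma 2.7: under (K0) and (K1), there exist `r* ∈ (0, r₀)` with
`Φ(r*) ≤ min{1, t₀}` and a constant `C > 0` depending only on `p₀` and `c̄`
such that `(∫₀^{Φ(r)} l^p) Φ(r)^{p-1} ≤ C r^{2p}` for all `1 ≤ p ≤ p₀` and
`r ∈ (0, r*]`. -/
theorem l_norm_Phi_estimate (p₀ cbar : ℝ) (hp₀ : 1 < p₀) (hcbar : 1 < cbar) :
    ∃ C : ℝ, 0 < C ∧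
      ∀ (k l Φ : ℝ → ℝ) (t₀ : ℝ),
        -- (K0)
        (∀ S : ℝ, 0 < S → IntegrableOn k (Ioc 0 S)) →
        (∀ S : ℝ, 0 < S → IntegrableOn l (Ioc 0 S)) →
        ContDiffOn ℝ 1 k (Ioi 0) →
        ContDiffOn ℝ 1 l (Ioi 0) →
        (∀ t : ℝ, 0 < t → 0 ≤ k t) →
        (∀ t : ℝ, 0 < t → 0 ≤ l t) →
        AntitoneOn k (Ioi 0) →
        AntitoneOn l (Ioi 0) →
        ConvexOn ℝ (Ioi 0) k →
        (∀ t : ℝ, 0 < t → ∫ s in (0:ℝ)..t, k (t - s) * l s = 1) →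
        -- (K1)
        0 < t₀ →
        IntegrableOn (fun s => l s ^ p₀) (Ioo 0 t₀) →
        (∀ t : ℝ, 0 < t → t ≤ t₀ →
          (1 / t) * ∫ s in (0:ℝ)..t, l s ^ p₀ ≤ cbar * l t ^ p₀) →
        -- Φ is the scaling function from Lemma 1.1
        IsScalingFunction l Φ →
        ∃ rstar : ℝ, 0 < rstar ∧ ENNReal.ofReal rstar < rZero l ∧
          Φ rstar ≤ min 1 t₀ ∧
          ∀ p : ℝ, 1 ≤ p → p ≤ p₀ → ∀ r : ℝ, 0 < r → r ≤ rstar →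
            (∫ s in (0:ℝ)..(Φ r), l s ^ p) * (Φ r) ^ (p - 1) ≤ C * r ^ (2 * p) := by
  refine ⟨cbar, by linarith, ?_⟩
  intro k l Φ t₀ hkint hlint hkC hlC hknn hlnn hkanti hlanti hkconv hconv ht₀
    hlp₀int hK1 hΦ
  obtain ⟨hΦnn, hΦmono, hΦcont, hΦ0, hΦint⟩ := hΦ
  have hlcont : ContinuousOn l (Ioi 0) := hlC.continuousOn
  set S : Set ℝ := {r : ℝ | 0 ≤ r ∧ ENNReal.ofReal r < rZero l} with hS
  -- Step 1 : rZero l > 0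
  have hlintpos : (∫⁻ t in Set.Ioi (0:ℝ), ENNReal.ofReal (l t)) ≠ 0 := by
    intro h0
    have hmeas : AEMeasurable (fun t => ENNReal.ofReal (l t))
        (volume.restrict (Ioi (0:ℝ))) :=
      (ENNReal.measurable_ofReal.comp_aemeasurable
        (hlcont.aemeasurable measurableSet_Ioi))
    have hae : (fun t => ENNReal.ofReal (l t)) =ᵐ[volume.restrict (Ioi (0:ℝ))] 0 :=
      (lintegral_eq_zero_iff' hmeas).1 h0
    have hae' := ae_restrict_of_ae_restrict_of_subset
      (Ioc_subset_Ioi_self : Ioc (0:ℝ) 1 ⊆ Ioi 0) hae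
    have hae1 : (fun s => k (1 - s) * l s) =ᵐ[volume.restrict (Ioc (0:ℝ) 1)] 0 := by
      filter_upwards [hae', ae_restrict_mem measurableSet_Ioc] with s hs hmem
      simp only [Pi.zero_apply, ENNReal.ofReal_eq_zero] at hs
      have : l s = 0 := le_antisymm hs (hlnn s hmem.1)
      simp [this]
    have h1 : (∫ s in (0:ℝ)..1, k (1 - s) * l s) = 0 := by
      rw [intervalIntegral.integral_of_le (by norm_num : (0:ℝ) ≤ 1)]
      exact integral_eq_zero_of_ae hae1
    have := hconv 1 one_pos
    rw [h1] at this
    norm_num at this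
  have hr0pos : 0 < rZero l := by
    apply ENNReal.rpow_pos_of_nonneg _ (by norm_num)
    exact pos_iff_ne_zero.2 hlintpos
  -- Step 2 : choose ε > 0 with ofReal ε < rZero l
  obtain ⟨c, hc0, hcr⟩ := exists_between hr0pos
  have hcne : c ≠ ⊤ := hcr.ne_top
  set ε : ℝ := c.toReal with hε
  have hεpos : 0 < ε := ENNReal.toReal_pos (pos_iff_ne_zero.1 hc0) hcne
  have hεlt : ENNReal.ofReal ε < rZero l := by
    rw [hε, ENNReal.ofReal_toReal hcne]; exact hcr
  -- Step 3 : use continuity of Φ at 0 to get δ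
  have h0S : (0:ℝ) ∈ S := ⟨le_refl 0, by simpa using hr0pos⟩
  have hcw : ContinuousWithinAt Φ S 0 := hΦcont 0 h0S
  have htend : Tendsto Φ (nhdsWithin 0 S) (nhds 0) := by
    simpa [hΦ0] using hcw.tendsto
  have hev : ∀ᶠ x in nhdsWithin 0 S, Φ x < min 1 t₀ :=
    htend.eventually_lt_const (by positivity)
  obtain ⟨δ, hδ0, hδ⟩ := Metric.mem_nhdsWithin_iff.1 hev
  -- Step 4 : define rstar
  set rstar : ℝ := min ε (δ/2) with hrstar
  have hrstarpos : 0 < rstar := lt_min hεpos (by linarith)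
  have hrstarlt : ENNReal.ofReal rstar < rZero l :=
    lt_of_le_of_lt (ENNReal.ofReal_le_ofReal (min_le_left _ _)) hεlt
  have hrstarS : rstar ∈ S := ⟨hrstarpos.le, hrstarlt⟩
  have hΦrstar : Φ rstar < min 1 t₀ := by
    apply hδ
    constructor
    · simp only [Metric.mem_ball, Real.dist_eq, sub_zero]
      rw [abs_of_pos hrstarpos]
      calc rstar ≤ δ/2 := min_le_right _ _
        _ < δ := by linarith
    · exact hrstarS
  refine ⟨rstar, hrstarpos, hrstarlt, hΦrstar.le, ?_⟩
  -- Step 5 : the main estimate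
  intro p hp1 hpp₀ r hr hrle
  have hrS : r ∈ S := ⟨hr.le,
    lt_of_le_of_lt (ENNReal.ofReal_le_ofReal hrle) hrstarlt⟩
  set T : ℝ := Φ r with hT
  have hTpos : 0 < T := by
    rw [hT, ← hΦ0]
    exact hΦmono h0S hrS hr
  have hTle : T ≤ min 1 t₀ := le_trans (hΦmono.monotoneOn hrS hrstarS hrle) hΦrstar.le
  have hTt₀ : T ≤ t₀ := le_trans hTle (min_le_right _ _)
  have hx : (∫ s in Ioc (0:ℝ) T, l s) = r ^ 2 := by
    rw [← intervalIntegral.integral_of_le hTpos.le]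
    exact hΦint r hr hrS.2
  have hr2 : (0:ℝ) < r ^ 2 := by positivity
  -- integrability
  have hl_int : IntegrableOn l (Ioc 0 T) := hlint T hTpos
  have hlcT : ContinuousOn l (Ioc 0 T) := hlcont.mono Ioc_subset_Ioi_self
  have hlp₀_int : IntegrableOn (fun s => l s ^ p₀) (Ioc 0 T) := by
    rw [integrableOn_Ioc_iff_integrableOn_Ioo]
    exact hlp₀int.mono_set (Ioo_subset_Ioo_right hTt₀)
  have hlp_cont : ContinuousOn (fun s => l s ^ p) (Ioc 0 T) :=
    hlcT.rpow_const (fun x _ => Or.inr (by linarith))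
  have hlp_int : IntegrableOn (fun s => l s ^ p) (Ioc 0 T) := by
    apply Integrable.mono' (hl_int.add hlp₀_int)
      (hlp_cont.aestronglyMeasurable measurableSet_Ioc)
    filter_upwards [ae_restrict_mem measurableSet_Ioc] with s hs
    rw [Real.norm_eq_abs, abs_of_nonneg (Real.rpow_nonneg (hlnn s hs.1) p)]
    exact rpow_le_add_rpow_of_le (hlnn s hs.1) hp1 hpp₀
  -- l T ≤ (r²)/T
  have hlT : T * l T ≤ r ^ 2 := by
    have hconst : (∫ s in Ioc (0:ℝ) T, (fun _ => l T) s) ≤ ∫ s in Ioc (0:ℝ) T, l s := by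
      apply setIntegral_mono_on (integrableOn_const measure_Ioc_lt_top.ne)
        hl_int measurableSet_Ioc
      intro s hs
      exact hlanti (mem_Ioi.2 hs.1) (mem_Ioi.2 hTpos) hs.2
    rw [setIntegral_const, Real.volume_real_Ioc_of_le hTpos.le, smul_eq_mul, hx] at hconst
    simpa using hconst
  -- (K1) estimate
  have hB : (∫ s in Ioc (0:ℝ) T, l s ^ p₀) ≤ cbar * T * (r ^ 2 / T) ^ p₀ := by
    have h1 := hK1 T hTpos hTt₀
    rw [intervalIntegral.integral_of_le hTpos.le] at h1
    have h2 : (∫ s in Ioc (0:ℝ) T, l s ^ p₀) ≤ cbar * T * l T ^ p₀ := by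
      rw [div_mul_eq_mul_div, div_le_iff₀ hTpos, one_mul] at h1
      calc (∫ s in Ioc (0:ℝ) T, l s ^ p₀)
          ≤ cbar * l T ^ p₀ * T := h1
        _ = cbar * T * l T ^ p₀ := by ring
    refine le_trans h2 ?_
    have h3 : l T ^ p₀ ≤ (r ^ 2 / T) ^ p₀ :=
      Real.rpow_le_rpow (hlnn T hTpos) ((le_div_iff₀ hTpos).2 (by linarith)) (by linarith)
    have : 0 ≤ cbar * T := by positivity
    exact mul_le_mul_of_nonneg_left h3 this
  -- interpolation via Hölder
  set θ : ℝ := (p - 1) / (p₀ - 1) with hθ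
  have hp₀1 : (0:ℝ) < p₀ - 1 := by linarith
  have hθ0 : 0 ≤ θ := div_nonneg (by linarith) hp₀1.le
  have hθ1 : θ ≤ 1 := (div_le_one hp₀1).2 (by linarith)
  have hθeq : θ * (p₀ - 1) = p - 1 := div_mul_cancel₀ _ hp₀1.ne'
  have hFmeas : AEMeasurable (fun s => ENNReal.ofReal (l s))
      (volume.restrict (Ioc (0:ℝ) T)) :=
    ENNReal.measurable_ofReal.comp_aemeasurable (hlcT.aemeasurable measurableSet_Ioc)
  have hHolder := ENNReal.lintegral_mul_norm_pow_le (μ := volume.restrict (Ioc (0:ℝ) T))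
    (f := fun s => ENNReal.ofReal (l s) ^ p₀) (g := fun s => ENNReal.ofReal (l s))
    (hFmeas.pow_const p₀) hFmeas hθ0 (by linarith : (0:ℝ) ≤ 1 - θ) (by ring)
  have hlhs : (∫⁻ s in Ioc (0:ℝ) T, (ENNReal.ofReal (l s) ^ p₀) ^ θ * ENNReal.ofReal (l s) ^ (1 - θ))
      = ∫⁻ s in Ioc (0:ℝ) T, ENNReal.ofReal (l s) ^ p := by
    congr 1; funext s
    rw [← ENNReal.rpow_mul,
      ← ENNReal.rpow_add_of_nonneg _ _ (mul_nonneg (by linarith) hθ0) (by linarith)]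
    congr 1
    linear_combination hθeq
  have hof1 : ENNReal.ofReal (∫ s in Ioc (0:ℝ) T, l s) = ∫⁻ s in Ioc (0:ℝ) T, ENNReal.ofReal (l s) :=
    ofReal_integral_eq_lintegral_ofReal hl_int
      ((ae_restrict_iff' measurableSet_Ioc).2 (ae_of_all _ fun s hs => hlnn s hs.1))
  have hofp : ENNReal.ofReal (∫ s in Ioc (0:ℝ) T, l s ^ p)
      = ∫⁻ s in Ioc (0:ℝ) T, ENNReal.ofReal (l s) ^ p := by
    rw [ofReal_integral_eq_lintegral_ofReal hlp_int
      ((ae_restrict_iff' measurableSet_Ioc).2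
        (ae_of_all _ fun s hs => Real.rpow_nonneg (hlnn s hs.1) p))]
    apply lintegral_congr_ae
    filter_upwards [ae_restrict_mem measurableSet_Ioc] with s hs
    exact (ENNReal.ofReal_rpow_of_nonneg (hlnn s hs.1) (by linarith : (0:ℝ) ≤ p)).symm
  have hofp₀ : ENNReal.ofReal (∫ s in Ioc (0:ℝ) T, l s ^ p₀)
      = ∫⁻ s in Ioc (0:ℝ) T, ENNReal.ofReal (l s) ^ p₀ := by
    rw [ofReal_integral_eq_lintegral_ofReal hlp₀_int
      ((ae_restrict_iff' measurableSet_Ioc).2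
        (ae_of_all _ fun s hs => Real.rpow_nonneg (hlnn s hs.1) p₀))]
    apply lintegral_congr_ae
    filter_upwards [ae_restrict_mem measurableSet_Ioc] with s hs
    exact (ENNReal.ofReal_rpow_of_nonneg (hlnn s hs.1) (by linarith : (0:ℝ) ≤ p₀)).symm
  have hBnn : (0:ℝ) ≤ cbar * T * (r ^ 2 / T) ^ p₀ := by positivity
  have hinterp : (∫ s in Ioc (0:ℝ) T, l s ^ p)
      ≤ (cbar * T * (r ^ 2 / T) ^ p₀) ^ θ * (r ^ 2) ^ (1 - θ) := by
    rw [← ENNReal.ofReal_le_ofReal_iff (by positivity)]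
    calc ENNReal.ofReal (∫ s in Ioc (0:ℝ) T, l s ^ p)
        = ∫⁻ s in Ioc (0:ℝ) T, ENNReal.ofReal (l s) ^ p := hofp
      _ = ∫⁻ s in Ioc (0:ℝ) T, (ENNReal.ofReal (l s) ^ p₀) ^ θ * ENNReal.ofReal (l s) ^ (1 - θ) :=
          hlhs.symm
      _ ≤ (∫⁻ s in Ioc (0:ℝ) T, ENNReal.ofReal (l s) ^ p₀) ^ θ
          * (∫⁻ s in Ioc (0:ℝ) T, ENNReal.ofReal (l s)) ^ (1 - θ) := hHolder
      _ = ENNReal.ofReal (∫ s in Ioc (0:ℝ) T, l s ^ p₀) ^ θ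
          * ENNReal.ofReal (r ^ 2) ^ (1 - θ) := by rw [hofp₀, ← hof1, hx]
      _ ≤ ENNReal.ofReal (cbar * T * (r ^ 2 / T) ^ p₀) ^ θ
          * ENNReal.ofReal (r ^ 2) ^ (1 - θ) := by
          gcongr
      _ = ENNReal.ofReal ((cbar * T * (r ^ 2 / T) ^ p₀) ^ θ * (r ^ 2) ^ (1 - θ)) := by
          rw [ENNReal.ofReal_mul (Real.rpow_nonneg hBnn θ),
            ← ENNReal.ofReal_rpow_of_nonneg hBnn hθ0,
            ← ENNReal.ofReal_rpow_of_nonneg hr2.le (by linarith)]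
  -- final algebraic identity
  have hcpos : (0:ℝ) < cbar := by linarith
  have hId : (cbar * T * (r ^ 2 / T) ^ p₀) ^ θ * (r ^ 2) ^ (1 - θ) * T ^ (p - 1)
      = cbar ^ θ * (r ^ 2) ^ p := by
    have hqpos : (0:ℝ) < r ^ 2 / T := by positivity
    have hBpos : (0:ℝ) < cbar * T * (r ^ 2 / T) ^ p₀ := by positivity
    rw [Real.rpow_def_of_pos hBpos, Real.rpow_def_of_pos hr2, Real.rpow_def_of_pos hr2,
      Real.rpow_def_of_pos hTpos, Real.rpow_def_of_pos hcpos]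
    have hlogB : Real.log (cbar * T * (r ^ 2 / T) ^ p₀)
        = Real.log cbar + Real.log T + p₀ * (Real.log (r ^ 2) - Real.log T) := by
      rw [Real.log_mul (by positivity) (by positivity),
        Real.log_mul hcpos.ne' hTpos.ne', Real.log_rpow hqpos,
        Real.log_div hr2.ne' hTpos.ne']
    rw [hlogB, ← Real.exp_add, ← Real.exp_add, ← Real.exp_add, Real.exp_eq_exp]
    linear_combination (Real.log (r ^ 2) - Real.log T) * hθeq
  have hcθ : cbar ^ θ ≤ cbar := by
    calc cbar ^ θ ≤ cbar ^ (1:ℝ) :=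
      Real.rpow_le_rpow_of_exponent_le hcbar.le hθ1
    _ = cbar := Real.rpow_one _
  have hr2p : r ^ (2 * p) = (r ^ 2) ^ p := by
    rw [show (2:ℝ) * p = ((2:ℕ):ℝ) * p by norm_num, Real.rpow_mul hr.le,
      Real.rpow_natCast]
  rw [intervalIntegral.integral_of_le hTpos.le]
  calc (∫ s in Ioc (0:ℝ) T, l s ^ p) * T ^ (p - 1)
      ≤ ((cbar * T * (r ^ 2 / T) ^ p₀) ^ θ * (r ^ 2) ^ (1 - θ)) * T ^ (p - 1) :=
        mul_le_mul_of_nonneg_right hinterp (Real.rpow_nonneg hTpos.le _)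
    _ = cbar ^ θ * (r ^ 2) ^ p := hId
    _ ≤ cbar * (r ^ 2) ^ p :=
        mul_le_mul_of_nonneg_right hcθ (Real.rpow_nonneg hr2.le _)
    _ = cbar * r ^ (2 * p) := by rw [hr2p]
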